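/- For 1 < k < n−1, the quantity Σ_{ℓ=0}^{k'−1} ( W(ℓ,n,m+1)/(n−1) − W(ℓ,n−1,m+1) ) · A(m, k'−ℓ−1) is strictly positive for all 1 ≤ m ≤ n−1, where k' = n−k. -/

import Mathlib

noncomputable section

open Finset

/-- The weight of a linearly ordered block (given as a list): the number of its
elements smaller than its first element. -/
def blockWeight (b : List ℕ) : ℕ := (b.filter (fun x => x < b.headI)).length

/-- `P` is a partition of `{1,…,n}` into linearly ordered blocks (nonempty lists
of distinct elements, pairwise disjoint, whose union is `{1,…,n}`). -/
def IsOrderedPartition (n : ℕ) (P : Finset (List ℕ)) : Prop :=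
  (∀ b ∈ P, b ≠ [] ∧ b.Nodup) ∧
  (∀ b₁ ∈ P, ∀ b₂ ∈ P, b₁ ≠ b₂ → ∀ x, x ∈ b₁ → x ∉ b₂) ∧
  (∀ x : ℕ, (∃ b ∈ P, x ∈ b) ↔ x ∈ Finset.Icc 1 n)

/-- The weight of an ordered partition: the sum of the weights of its blocks. -/
def partitionWeight (P : Finset (List ℕ)) : ℕ := ∑ b ∈ P, blockWeight b

/-- The weighted Lah number `W(ℓ,n,m)`: the number of partitions of `{1,…,n}`
into exactly `m` linearly ordered blocks with total weight `ℓ`.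
(It vanishes for `ℓ < 0`.) -/
def weightedLah (ℓ : ℤ) (n m : ℕ) : ℕ :=
  Set.ncard {P : Finset (List ℕ) |
    IsOrderedPartition n P ∧ P.card = m ∧ (partitionWeight P : ℤ) = ℓ}

/-- The number of cycles of a permutation of `Fin n` (fixed points count as cycles). -/
def numCycles {n : ℕ} (σ : Equiv.Perm (Fin n)) : ℕ :=
  Multiset.card σ.cycleType + (n - σ.cycleType.sum)

/-- The unsigned Stirling number of the first kind: the number of permutations of
`n` elements with exactly `m` cycles. -/
def stirlingFirst (n m : ℕ) : ℕ :=
  Nat.card {σ : Equiv.Perm (Fin n) // numCycles σ = m}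

/-- The number of descents of a permutation of `Fin m`. -/
def descentCount (m : ℕ) (σ : Equiv.Perm (Fin m)) : ℕ :=
  ((Finset.range (m - 1)).filter (fun i =>
    ((List.ofFn (fun j => (σ j : ℕ))).getD (i + 1) 0) <
      ((List.ofFn (fun j => (σ j : ℕ))).getD i 0))).card

/-- The Eulerian number `A(m,j)`: permutations of `{1,…,m}` with exactly `j` descents. -/
def eulerian (m j : ℕ) : ℕ :=
  Nat.card {σ : Equiv.Perm (Fin m) // descentCount m σ = j}

/-- The coefficient `e_{k,n,m}` of the Ehrhart polynomial of the hypersimplex. -/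
def eCoef (k n m : ℕ) : ℚ :=
  (1 / (n - 1).factorial : ℚ) *
    ∑ ℓ ∈ Finset.range k, (weightedLah ℓ n (m + 1) : ℚ) * (eulerian m (k - ℓ - 1) : ℚ)

/-- Number of lattice points of the `t`-th dilate of the hypersimplex `Δ_{k,n}`,
i.e. points of `{0,…,t}^n` with coordinate sum `k·t`. -/
def hyperCount (k n t : ℕ) : ℕ :=
  Nat.card {x : Fin n → ℤ // (∀ i, 0 ≤ x i ∧ x i ≤ (t : ℤ)) ∧ ∑ i, x i = (k : ℤ) * t}

/-- Number of lattice points of the `t`-th dilate of the half-open hypersimplex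
`Δ'_{k,n} ⊆ ℝ^{n-1}` (for `k > 1`). -/
def halfOpenCount (k n t : ℕ) : ℕ :=
  Nat.card {x : Fin (n - 1) → ℤ // (∀ i, 0 ≤ x i ∧ x i ≤ (t : ℤ)) ∧
    ((k : ℤ) - 1) * t < ∑ i, x i ∧ ∑ i, x i ≤ (k : ℤ) * t}

/-- Number of lattice points of the `t`-th dilate of the independence polytope of
`U_{k,n}`, i.e. points of `{0,…,t}^n` with coordinate sum at most `k·t`. -/
def indepCount (k n t : ℕ) : ℕ :=
  Nat.card {x : Fin n → ℤ // (∀ i, 0 ≤ x i ∧ x i ≤ (t : ℤ)) ∧ ∑ i, x i ≤ (k : ℤ) * t}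

/-- Number of lattice points of a region `S ⊆ ℝ^d`. -/
def latticeCount {d : ℕ} (S : Set (Fin d → ℝ)) : ℕ :=
  Nat.card {x : Fin d → ℤ // (fun i => (x i : ℝ)) ∈ S}

lemma erase_insertIdx {a : ℕ} : ∀ (l : List ℕ), a ∉ l → ∀ i, (l.insertIdx i a).erase a = l
  | [], _, 0 => by simp
  | [], _, (i+1) => by simp [List.insertIdx]
  | (b :: t), h, 0 => by simp
  | (b :: t), h, (i+1) => by
      simp only [List.insertIdx_succ_cons]
      rw [List.erase_cons_tail (by simp; exact fun hba => h (hba ▸ List.mem_cons_self (a := b) (l := t))),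
        erase_insertIdx t (fun ht => h (List.mem_cons_of_mem _ ht)) i]

lemma indexOf_insertIdx {a : ℕ} : ∀ (l : List ℕ), a ∉ l → ∀ i, i ≤ l.length →
    (l.insertIdx i a).idxOf a = i
  | l, _, 0 => by simp [List.insertIdx_zero, List.idxOf_cons_self]
  | [], _, (i+1) => by simp
  | (b :: t), h, (i+1) => by
      intro hi
      simp only [List.insertIdx_succ_cons]
      rw [List.idxOf_cons_ne _ (by exact fun hba => h (hba ▸ List.mem_cons_self (a := b) (l := t))),
        indexOf_insertIdx t (fun ht => h (List.mem_cons_of_mem _ ht)) i (by simpa using hi)]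

lemma mem_insertIdx {a x : ℕ} {l : List ℕ} {i : ℕ} (hi : i ≤ l.length) :
    x ∈ l.insertIdx i a ↔ x = a ∨ x ∈ l := by
  rw [(List.perm_insertIdx a l hi).mem_iff]; simp

lemma headI_insertIdx {a : ℕ} {l : List ℕ} (hl : l ≠ []) (i : ℕ) :
    (l.insertIdx (i+1) a).headI = l.headI := by
  cases l with
  | nil => simp at hl
  | cons b t => simp [List.insertIdx_succ_cons]

lemma blockWeight_insertIdx {a : ℕ} {l : List ℕ} (hl : l ≠ []) {i : ℕ} (hi : i + 1 ≤ l.length)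
    (hlt : ∀ y ∈ l, y < a) : blockWeight (l.insertIdx (i+1) a) = blockWeight l := by
  unfold blockWeight
  rw [headI_insertIdx hl, ((List.perm_insertIdx a l hi).filter _).length_eq,
    List.filter_cons_of_neg]
  simp only [decide_eq_true_eq, not_lt]
  refine le_of_lt (hlt l.headI ?_)
  cases l with
  | nil => simp at hl
  | cons b t => exact List.mem_cons_self

lemma insertIdx_a_inj {a : ℕ} {l : List ℕ} (h : a ∉ l) {i j : ℕ} (hi : i ≤ l.length)
    (hj : j ≤ l.length) (heq : l.insertIdx i a = l.insertIdx j a) : i = j := by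
  rw [← indexOf_insertIdx l h i hi, ← indexOf_insertIdx l h j hj, heq]

lemma iop_mem_Icc {n : ℕ} {P : Finset (List ℕ)} (h : IsOrderedPartition n P)
    {b : List ℕ} {x : ℕ} (hb : b ∈ P) (hx : x ∈ b) : x ∈ Finset.Icc 1 n :=
  (h.2.2 x).1 ⟨b, hb, hx⟩

lemma iop_finite (n : ℕ) : {P : Finset (List ℕ) | IsOrderedPartition n P}.Finite := by
  classical
  set L : List ℕ := (Finset.Icc 1 n).sort (· ≤ ·) with hL
  set T : Finset (List ℕ) := (L.sublists.flatMap List.permutations).toFinset with hT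
  apply Set.Finite.subset (T.powerset : Finset (Finset (List ℕ))).finite_toSet
  intro P hP
  simp only [Finset.coe_powerset, Set.mem_preimage, Set.mem_powerset_iff, Finset.coe_subset,
    Finset.mem_coe]
  intro b hb
  have hnd : b.Nodup := ((hP.1 b hb).2)
  have hsub : b ⊆ L := by
    intro x hx
    rw [hL, Finset.mem_sort]
    exact iop_mem_Icc hP hb hx
  obtain ⟨l, hlp, hls⟩ := hnd.subperm hsub
  rw [hT, List.mem_toFinset, List.mem_flatMap]
  exact ⟨l, List.mem_sublists.2 hls, List.mem_permutations.2 hlp.symm⟩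


def insBlock (x a : ℕ) (l : List ℕ) : List ℕ :=
  if x ∈ l then l.insertIdx (l.idxOf x + 1) a else l

def insPart (x a : ℕ) (P : Finset (List ℕ)) : Finset (List ℕ) := P.image (insBlock x a)

section Ins

variable {N : ℕ} {P : Finset (List ℕ)} (hP : IsOrderedPartition N P)
include hP

lemma iop_not_mem {b : List ℕ} (hb : b ∈ P) : (N+1) ∉ b := by
  intro hmem
  have := iop_mem_Icc hP hb hmem
  simp [Finset.mem_Icc] at this

omit hP in
lemma idx_le {x : ℕ} {b : List ℕ} (hxb : x ∈ b) : b.idxOf x + 1 ≤ b.length :=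
  Nat.succ_le_of_lt (List.idxOf_lt_length_iff.2 hxb)

lemma mem_insBlock {x : ℕ} {b : List ℕ} (hb : b ∈ P) {y : ℕ} :
    y ∈ insBlock x (N+1) b ↔ y ∈ b ∨ (y = N+1 ∧ x ∈ b) := by
  unfold insBlock
  split
  · next hxb =>
      rw [mem_insertIdx (idx_le hxb)]
      tauto
  · next hxb => tauto

lemma erase_insBlock {x : ℕ} {b : List ℕ} (hb : b ∈ P) :
    (insBlock x (N+1) b).erase (N+1) = b := by
  unfold insBlock
  split
  · exact erase_insertIdx b (iop_not_mem hP hb) _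
  · exact List.erase_of_not_mem (iop_not_mem hP hb)

lemma insBlock_injOn {x : ℕ} {b b' : List ℕ} (hb : b ∈ P) (hb' : b' ∈ P)
    (heq : insBlock x (N+1) b = insBlock x (N+1) b') : b = b' := by
  rw [← erase_insBlock hP hb (x := x), ← erase_insBlock hP hb' (x := x), heq]

lemma erase_insPart (x : ℕ) :
    (insPart x (N+1) P).image (fun l => l.erase (N+1)) = P := by
  unfold insPart
  rw [Finset.image_image]
  have : ∀ b ∈ P, ((fun l => l.erase (N+1)) ∘ insBlock x (N+1)) b = id b := by
    intro b hb; exact erase_insBlock hP hb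
  rw [Finset.image_congr this, Finset.image_id]

lemma insBlock_ne_nil {x : ℕ} {b : List ℕ} (hb : b ∈ P) : insBlock x (N+1) b ≠ [] := by
  unfold insBlock
  split
  · next hxb =>
      apply List.ne_nil_of_length_pos
      rw [List.length_insertIdx_of_le_length (idx_le hxb)]
      omega
  · exact (hP.1 b hb).1

lemma insBlock_nodup {x : ℕ} {b : List ℕ} (hb : b ∈ P) : (insBlock x (N+1) b).Nodup := by
  unfold insBlock
  split
  · next hxb =>
      rw [(List.perm_insertIdx (N+1) b (idx_le hxb)).nodup_iff]
      exact List.nodup_cons.2 ⟨iop_not_mem hP hb, (hP.1 b hb).2⟩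
  · exact (hP.1 b hb).2

lemma insPart_card {x : ℕ} : (insPart x (N+1) P).card = P.card :=
  Finset.card_image_of_injOn (fun b hb b' hb' h => insBlock_injOn hP hb hb' h)

lemma insBlock_weight {x : ℕ} {b : List ℕ} (hb : b ∈ P) :
    blockWeight (insBlock x (N+1) b) = blockWeight b := by
  unfold insBlock
  split
  · next hxb =>
      exact blockWeight_insertIdx (hP.1 b hb).1 (idx_le hxb)
        (fun y hy => by
          have := iop_mem_Icc hP hb hy
          simp [Finset.mem_Icc] at this; omega)
  · rfl

lemma insPart_weight {x : ℕ} : partitionWeight (insPart x (N+1) P) = partitionWeight P := by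
  unfold partitionWeight insPart
  rw [Finset.sum_image (fun b hb b' hb' h => insBlock_injOn hP hb hb' h)]
  exact Finset.sum_congr rfl (fun b hb => insBlock_weight hP hb)

lemma insPart_iop {x : ℕ} (hx : x ∈ Finset.Icc 1 N) :
    IsOrderedPartition (N+1) (insPart x (N+1) P) := by
  obtain ⟨b₀, hb₀, hxb₀⟩ := (hP.2.2 x).2 hx
  refine ⟨?_, ?_, ?_⟩
  · intro c hc
    obtain ⟨b, hb, rfl⟩ := Finset.mem_image.1 hc
    exact ⟨insBlock_ne_nil hP hb, insBlock_nodup hP hb⟩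
  · intro c₁ hc₁ c₂ hc₂ hne y hy₁ hy₂
    obtain ⟨b₁, hb₁, rfl⟩ := Finset.mem_image.1 hc₁
    obtain ⟨b₂, hb₂, rfl⟩ := Finset.mem_image.1 hc₂
    have hbne : b₁ ≠ b₂ := fun h => hne (h ▸ rfl)
    rw [mem_insBlock hP hb₁] at hy₁
    rw [mem_insBlock hP hb₂] at hy₂
    rcases hy₁ with h1 | ⟨rfl, hx1⟩
    · rcases hy₂ with h2 | ⟨rfl, hx2⟩
      · exact hP.2.1 b₁ hb₁ b₂ hb₂ hbne y h1 h2
      · exact iop_not_mem hP hb₁ h1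
    · rcases hy₂ with h2 | ⟨_, hx2⟩
      · exact iop_not_mem hP hb₂ h2
      · exact hP.2.1 b₁ hb₁ b₂ hb₂ hbne x hx1 hx2
  · intro y
    constructor
    · rintro ⟨c, hc, hyc⟩
      obtain ⟨b, hb, rfl⟩ := Finset.mem_image.1 hc
      rw [mem_insBlock hP hb] at hyc
      rcases hyc with h | ⟨rfl, _⟩
      · have := iop_mem_Icc hP hb h
        simp only [Finset.mem_Icc] at this ⊢
        omega
      · simp [Finset.mem_Icc]
    · intro hy
      simp only [Finset.mem_Icc] at hy
      by_cases hyN : y ≤ N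
      · obtain ⟨b, hb, hyb⟩ := (hP.2.2 y).2 (Finset.mem_Icc.2 ⟨hy.1, hyN⟩)
        exact ⟨insBlock x (N+1) b, Finset.mem_image_of_mem _ hb,
          (mem_insBlock hP hb).2 (Or.inl hyb)⟩
      · have hyeq : y = N+1 := by omega
        exact ⟨insBlock x (N+1) b₀, Finset.mem_image_of_mem _ hb₀,
          (mem_insBlock hP hb₀).2 (Or.inr ⟨hyeq, hxb₀⟩)⟩

omit hP in
lemma mem_Icc_of_self_mem {x : ℕ} (hx : x ∈ Finset.Icc 1 N) : x ≠ N + 1 := by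
  simp only [Finset.mem_Icc] at hx; omega

lemma singleton_not_mem_insPart {x : ℕ} (hx : x ∈ Finset.Icc 1 N) :
    [N+1] ∉ insPart x (N+1) P := by
  intro hc
  obtain ⟨b, hb, hbe⟩ := Finset.mem_image.1 hc
  have hxb : x ∈ b := by
    by_contra hxb
    have : b = [N+1] := by rw [← hbe]; unfold insBlock; rw [if_neg hxb]
    exact iop_not_mem hP hb (this ▸ List.mem_cons_self)
  have : x ∈ [N+1] := by
    rw [← hbe, mem_insBlock hP hb]; exact Or.inl hxb
  simp at this
  exact mem_Icc_of_self_mem hx this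

end Ins

section Inj

variable {N : ℕ}

lemma insPart_inj {P P' : Finset (List ℕ)} {x x' : ℕ}
    (hP : IsOrderedPartition N P) (hP' : IsOrderedPartition N P')
    (hx : x ∈ Finset.Icc 1 N) (hx' : x' ∈ Finset.Icc 1 N)
    (heq : insPart x (N+1) P = insPart x' (N+1) P') : P = P' ∧ x = x' := by
  have hPP : P = P' := by
    rw [← erase_insPart hP x, ← erase_insPart hP' x', heq]
  subst hPP
  refine ⟨rfl, ?_⟩
  obtain ⟨b, hb, hxb⟩ := (hP.2.2 x).2 hx
  obtain ⟨b', hb', hx'b⟩ := (hP.2.2 x').2 hx'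
  have hc : insBlock x (N+1) b ∈ insPart x (N+1) P := Finset.mem_image_of_mem _ hb
  have hc' : insBlock x' (N+1) b' ∈ insPart x (N+1) P := by
    rw [heq]; exact Finset.mem_image_of_mem _ hb'
  have hmc : (N+1) ∈ insBlock x (N+1) b := (mem_insBlock hP hb).2 (Or.inr ⟨rfl, hxb⟩)
  have hmc' : (N+1) ∈ insBlock x' (N+1) b' := by
    rw [mem_insBlock hP' hb']; exact Or.inr ⟨rfl, hx'b⟩
  have hcc : insBlock x (N+1) b = insBlock x' (N+1) b' := by
    by_contra hne
    exact (insPart_iop hP hx).2.1 _ hc _ hc' hne (N+1) hmc hmc'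
  have hbb : b = b' := by
    rw [← erase_insBlock hP hb (x := x), ← erase_insBlock hP' hb' (x := x'), hcc]
  subst hbb
  have h1 : b.insertIdx (b.idxOf x + 1) (N+1) = b.insertIdx (b.idxOf x' + 1) (N+1) := by
    have e1 : insBlock x (N+1) b = b.insertIdx (b.idxOf x + 1) (N+1) := by
      unfold insBlock; rw [if_pos hxb]
    have e2 : insBlock x' (N+1) b = b.insertIdx (b.idxOf x' + 1) (N+1) := by
      unfold insBlock; rw [if_pos hx'b]
    rw [← e1, ← e2, hcc]
  have := insertIdx_a_inj (iop_not_mem hP hb) (idx_le hxb) (idx_le hx'b) h1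
  exact (List.idxOf_inj hxb).1 (by omega)

lemma addSing_not_mem {P : Finset (List ℕ)} (hP : IsOrderedPartition N P) : [N+1] ∉ P :=
  fun h => iop_not_mem hP h (List.mem_cons_self)

lemma addSing_iop {P : Finset (List ℕ)} (hP : IsOrderedPartition N P) :
    IsOrderedPartition (N+1) (insert [N+1] P) := by
  refine ⟨?_, ?_, ?_⟩
  · intro b hb
    rcases Finset.mem_insert.1 hb with rfl | hb
    · exact ⟨by simp, by simp⟩
    · exact hP.1 b hb
  · intro b₁ hb₁ b₂ hb₂ hne y hy₁ hy₂
    rcases Finset.mem_insert.1 hb₁ with rfl | hb₁ <;>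
      rcases Finset.mem_insert.1 hb₂ with rfl | hb₂
    · exact hne rfl
    · have : y = N+1 := by simpa using hy₁
      exact iop_not_mem hP hb₂ (this ▸ hy₂)
    · have : y = N+1 := by simpa using hy₂
      exact iop_not_mem hP hb₁ (this ▸ hy₁)
    · exact hP.2.1 b₁ hb₁ b₂ hb₂ hne y hy₁ hy₂
  · intro y
    constructor
    · rintro ⟨b, hb, hyb⟩
      rcases Finset.mem_insert.1 hb with rfl | hb
      · have : y = N+1 := by simpa using hyb
        simp [Finset.mem_Icc, this]
      · have := iop_mem_Icc hP hb hyb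
        simp only [Finset.mem_Icc] at this ⊢
        omega
    · intro hy
      simp only [Finset.mem_Icc] at hy
      by_cases hyN : y ≤ N
      · obtain ⟨b, hb, hyb⟩ := (hP.2.2 y).2 (Finset.mem_Icc.2 ⟨hy.1, hyN⟩)
        exact ⟨b, Finset.mem_insert_of_mem hb, hyb⟩
      · have : y = N+1 := by omega
        exact ⟨[N+1], Finset.mem_insert_self _ _, by simp [this]⟩

lemma addSing_card {P : Finset (List ℕ)} (hP : IsOrderedPartition N P) :
    (insert [N+1] P).card = P.card + 1 :=
  Finset.card_insert_of_notMem (addSing_not_mem hP)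

lemma addSing_weight {P : Finset (List ℕ)} (hP : IsOrderedPartition N P) :
    partitionWeight (insert [N+1] P) = partitionWeight P := by
  unfold partitionWeight
  rw [Finset.sum_insert (addSing_not_mem hP)]
  simp [blockWeight]

end Inj

def WSet (n m ℓ : ℕ) : Set (Finset (List ℕ)) :=
  {P | IsOrderedPartition n P ∧ P.card = m ∧ partitionWeight P = ℓ}

lemma WSet_finite (n m ℓ : ℕ) : (WSet n m ℓ).Finite :=
  (iop_finite n).subset (fun _ h => h.1)

lemma W_step (N m ℓ : ℕ) :
    N * (WSet N (m+1) ℓ).ncard + (WSet N m ℓ).ncard ≤ (WSet (N+1) (m+1) ℓ).ncard := by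
  classical
  set A₁ := WSet N (m+1) ℓ
  set A₂ := WSet N m ℓ
  set B := WSet (N+1) (m+1) ℓ with hB
  set Φ : Finset (List ℕ) × ℕ → Finset (List ℕ) := fun p => insPart p.2 (N+1) p.1 with hΦ
  set D₁ : Set (Finset (List ℕ) × ℕ) := A₁ ×ˢ (↑(Finset.Icc 1 N) : Set ℕ) with hD₁
  set S₁ := Φ '' D₁ with hS₁
  set S₂ := (fun P => insert [N+1] P) '' A₂ with hS₂
  have hmemD₁ : ∀ p ∈ D₁, IsOrderedPartition N p.1 ∧ p.1.card = m + 1 ∧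
      partitionWeight p.1 = ℓ ∧ p.2 ∈ Finset.Icc 1 N := by
    rintro ⟨P, x⟩ hp
    obtain ⟨hPA, hxI⟩ := hp
    exact ⟨hPA.1, hPA.2.1, hPA.2.2, hxI⟩
  have hS₁B : S₁ ⊆ B := by
    rintro Q ⟨⟨P, x⟩, hp, rfl⟩
    obtain ⟨h1, h2, h3, h4⟩ := hmemD₁ _ hp
    exact ⟨insPart_iop h1 h4, by rw [insPart_card h1, h2], by rw [insPart_weight h1, h3]⟩
  have hS₂B : S₂ ⊆ B := by
    rintro Q ⟨P, hP, rfl⟩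
    obtain ⟨h1, h2, h3⟩ := hP
    exact ⟨addSing_iop h1, by rw [addSing_card h1, h2], by rw [addSing_weight h1, h3]⟩
  have hBfin : B.Finite := WSet_finite _ _ _
  have hdisj : Disjoint S₁ S₂ := by
    rw [Set.disjoint_left]
    rintro Q ⟨⟨P, x⟩, hp, rfl⟩ ⟨P', hP', hQ'⟩
    obtain ⟨h1, _, _, h4⟩ := hmemD₁ _ hp
    refine singleton_not_mem_insPart h1 h4 ?_
    rw [hΦ] at hQ'
    rw [show insPart (P, x).2 (N+1) (P, x).1 = insert [N+1] P' from hQ'.symm]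
    exact Finset.mem_insert_self _ _
  have hinj₁ : Set.InjOn Φ D₁ := by
    rintro ⟨P, x⟩ hp ⟨P', x'⟩ hp' heq
    obtain ⟨h1, _, _, h4⟩ := hmemD₁ _ hp
    obtain ⟨h1', _, _, h4'⟩ := hmemD₁ _ hp'
    obtain ⟨e1, e2⟩ := insPart_inj h1 h1' h4 h4' heq
    exact Prod.ext e1 e2
  have hinj₂ : Set.InjOn (fun P => insert [N+1] P) A₂ := by
    intro P hP P' hP' heq
    have := congrArg (fun Q => Finset.erase Q [N+1]) heq
    simpa [Finset.erase_insert (addSing_not_mem hP.1),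
      Finset.erase_insert (addSing_not_mem hP'.1)] using this
  have hcard₁ : S₁.ncard = A₁.ncard * N := by
    rw [hS₁, Set.ncard_image_of_injOn hinj₁, hD₁, ← Nat.card_coe_set_eq,
      Nat.card_congr (Equiv.Set.prod _ _), Nat.card_prod,
      Nat.card_coe_set_eq, Nat.card_coe_set_eq, Set.ncard_coe_finset]
    simp
  have hcard₂ : S₂.ncard = A₂.ncard := Set.ncard_image_of_injOn hinj₂
  have hle : (S₁ ∪ S₂).ncard ≤ B.ncard :=
    Set.ncard_le_ncard (Set.union_subset hS₁B hS₂B) hBfin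
  rw [Set.ncard_union_eq hdisj (hBfin.subset hS₁B) (hBfin.subset hS₂B), hcard₁, hcard₂] at hle
  rwa [Nat.mul_comm N]

lemma exists_partition (N m ℓ : ℕ) (hm : 1 ≤ m) (h : ℓ + m ≤ N) :
    (WSet N m ℓ).Nonempty := by
  classical
  set B0 : List ℕ :=
    (ℓ+1) :: ((List.range ℓ).map (·+1) ++ (List.range (N-m-ℓ)).map (fun i => i+ℓ+2)) with hB0
  have hB0mem : ∀ y, y ∈ B0 ↔ 1 ≤ y ∧ y ≤ N-m+1 := by
    intro y
    simp only [hB0, List.mem_cons, List.mem_append, List.mem_map, List.mem_range]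
    constructor
    · rintro (rfl | ⟨⟨i, hi, rfl⟩ | ⟨i, hi, rfl⟩⟩) <;> omega
    · rintro ⟨h1, h2⟩
      rcases Nat.lt_trichotomy y (ℓ+1) with hy | hy | hy
      · exact Or.inr (Or.inl ⟨y - 1, by omega, by omega⟩)
      · exact Or.inl hy
      · exact Or.inr (Or.inr ⟨y - ℓ - 2, by omega, by omega⟩)
  have hB0nodup : B0.Nodup := by
    rw [hB0, List.nodup_cons, List.nodup_append]
    refine ⟨?_, ?_, ?_, ?_⟩
    · simp only [List.mem_append, List.mem_map, List.mem_range]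
      rintro (⟨i, hi, hie⟩ | ⟨i, hi, hie⟩) <;> omega
    · exact (List.nodup_range (n := ℓ)).map (fun a b => by omega)
    · exact List.nodup_range.map (fun a b => by omega)
    · intro y hy z hy'
      simp only [List.mem_map, List.mem_range] at hy hy'
      obtain ⟨i, hi, rfl⟩ := hy
      obtain ⟨i', hi', he⟩ := hy'
      omega
  have hB0ne : B0 ≠ [] := by simp [hB0]
  have hB0w : blockWeight B0 = ℓ := by
    unfold blockWeight
    have hhead : B0.headI = ℓ+1 := by simp [hB0]
    rw [hhead, hB0]
    rw [List.filter_cons_of_neg (by simp), List.filter_append, List.filter_map,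
      List.filter_map, List.length_append, List.length_map, List.length_map]
    have e1 : List.filter ((fun x => decide (x < ℓ+1)) ∘ (·+1)) (List.range ℓ) =
        List.range ℓ := by
      rw [List.filter_eq_self]
      intro a ha
      simp only [Function.comp, decide_eq_true_eq]
      simp only [List.mem_range] at ha
      omega
    have e2 : List.filter ((fun x => decide (x < ℓ+1)) ∘ (fun i => i+ℓ+2))
        (List.range (N-m-ℓ)) = [] := by
      rw [List.filter_eq_nil_iff]
      intro a ha
      simp only [Function.comp, decide_eq_true_eq]
      omega
    rw [e1, e2]
    simp
  set Q : Finset (List ℕ) := (Finset.Icc (N-m+2) N).image (fun i => [i]) with hQ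
  have hQmem : ∀ c, c ∈ Q ↔ ∃ i, (N-m+2 ≤ i ∧ i ≤ N) ∧ c = [i] := by
    intro c
    simp [hQ, Finset.mem_image, Finset.mem_Icc, eq_comm]
  have hB0Q : B0 ∉ Q := by
    intro hc
    obtain ⟨i, hi, he⟩ := (hQmem B0).1 hc
    have : i ∈ B0 := by rw [he]; simp
    rw [hB0mem i] at this
    omega
  refine ⟨insert B0 Q, ⟨?_, ?_, ?_⟩, ?_, ?_⟩
  · -- blocks nonempty and nodup
    intro b hb
    rcases Finset.mem_insert.1 hb with rfl | hb
    · exact ⟨hB0ne, hB0nodup⟩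
    · obtain ⟨i, _, rfl⟩ := (hQmem b).1 hb
      exact ⟨by simp, by simp⟩
  · -- pairwise disjoint
    intro b₁ hb₁ b₂ hb₂ hne y hy₁ hy₂
    rcases Finset.mem_insert.1 hb₁ with rfl | hb₁ <;>
      rcases Finset.mem_insert.1 hb₂ with rfl | hb₂
    · exact hne rfl
    · obtain ⟨i, hi, rfl⟩ := (hQmem b₂).1 hb₂
      rw [hB0mem y] at hy₁
      simp only [List.mem_singleton] at hy₂
      omega
    · obtain ⟨i, hi, rfl⟩ := (hQmem b₁).1 hb₁
      rw [hB0mem y] at hy₂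
      simp only [List.mem_singleton] at hy₁
      omega
    · obtain ⟨i, hi, rfl⟩ := (hQmem b₁).1 hb₁
      obtain ⟨i', hi', rfl⟩ := (hQmem b₂).1 hb₂
      simp only [List.mem_singleton] at hy₁ hy₂
      exact hne (by rw [hy₁] at hy₂; rw [hy₂])
  · -- coverage
    intro y
    constructor
    · rintro ⟨b, hb, hyb⟩
      rcases Finset.mem_insert.1 hb with rfl | hb
      · rw [hB0mem y] at hyb
        simp only [Finset.mem_Icc]
        omega
      · obtain ⟨i, hi, rfl⟩ := (hQmem b).1 hb
        simp only [List.mem_singleton] at hyb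
        simp only [Finset.mem_Icc]
        omega
    · intro hy
      simp only [Finset.mem_Icc] at hy
      by_cases hc : y ≤ N-m+1
      · exact ⟨B0, Finset.mem_insert_self _ _, (hB0mem y).2 ⟨hy.1, hc⟩⟩
      · refine ⟨[y], Finset.mem_insert_of_mem ((hQmem [y]).2 ⟨y, ⟨by omega, hy.2⟩, rfl⟩), by simp⟩
  · -- card
    rw [Finset.card_insert_of_notMem hB0Q, hQ,
      Finset.card_image_of_injective _ (fun a b hab => by simpa using hab), Nat.card_Icc]
    omega
  · -- weight
    unfold partitionWeight
    rw [Finset.sum_insert hB0Q, hB0w, hQ,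
      Finset.sum_image (fun a _ b _ hab => by simpa using hab)]
    have : ∀ i ∈ Finset.Icc (N-m+2) N, blockWeight [i] = 0 := by
      intro i _; simp [blockWeight]
    rw [Finset.sum_congr rfl this]
    simp

lemma eulerian_pos (m j : ℕ) (hj : j < m) : 0 < eulerian m j := by
  have hm : 0 < m := by omega
  set F : Fin m → Fin m := fun i => if (i:ℕ) ≤ j then (⟨j - (i:ℕ), by omega⟩ : Fin m) else i
    with hF
  have hcoe : ∀ i : Fin m, ((F i : Fin m) : ℕ) = if (i:ℕ) ≤ j then j - (i:ℕ) else (i:ℕ) := by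
    intro i
    rw [hF]
    by_cases hij : (i:ℕ) ≤ j <;> simp [hij]
  have hinv : Function.Involutive F := by
    intro i
    apply Fin.val_injective
    rw [hcoe (F i), hcoe i]
    split_ifs <;> omega
  set σ := hinv.toPerm F with hσ
  have hval : ∀ i : Fin m, (σ i : ℕ) = if (i:ℕ) ≤ j then j - (i:ℕ) else (i:ℕ) := fun i => hcoe i
  have hgetD : ∀ i : ℕ, (hi : i < m) →
      (List.ofFn (fun p : Fin m => (σ p : ℕ))).getD i 0 = (σ ⟨i, hi⟩ : ℕ) := by
    intro i hi
    rw [List.getD_eq_getElem?_getD, List.getElem?_ofFn, dif_pos hi]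
    rfl
  have hdc : descentCount m σ = j := by
    unfold descentCount
    have hstep : (Finset.range (m-1)).filter (fun i =>
        ((List.ofFn (fun p : Fin m => (σ p : ℕ))).getD (i + 1) 0) <
          ((List.ofFn (fun p : Fin m => (σ p : ℕ))).getD i 0)) =
        (Finset.range (m-1)).filter (fun i => i < j) := by
      apply Finset.filter_congr
      intro i hi
      simp only [Finset.mem_range] at hi
      rw [hgetD (i+1) (by omega), hgetD i (by omega), hval, hval]
      simp only
      constructor
      · intro hlt
        split_ifs at hlt <;> simp_all <;> omega
      · intro hij
        have h1 : i + 1 ≤ j := by omega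
        have h2 : i ≤ j := by omega
        simp only [h1, h2, if_pos]
        omega
    rw [hstep]
    have : (Finset.range (m-1)).filter (fun i => i < j) = Finset.range j := by
      ext i
      simp only [Finset.mem_filter, Finset.mem_range]
      omega
    rw [this, Finset.card_range]
  unfold eulerian
  haveI : Nonempty {σ' : Equiv.Perm (Fin m) // descentCount m σ' = j} := ⟨⟨σ, hdc⟩⟩
  exact Nat.card_pos

lemma weightedLah_eq (ℓ n m : ℕ) : weightedLah (ℓ : ℤ) n m = (WSet n m ℓ).ncard := by
  unfold weightedLah WSet
  congr 1
  ext P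
  simp [Nat.cast_inj]

theorem key_sum_pos (k n m : ℕ) (hk : 1 < k) (hkn : k < n - 1)
    (hm : 1 ≤ m) (hmn : m ≤ n - 1) :
    0 < ∑ ℓ ∈ Finset.range (n - k),
      ((weightedLah (ℓ : ℤ) n (m + 1) : ℚ) / ((n : ℚ) - 1) -
          (weightedLah (ℓ : ℤ) (n - 1) (m + 1) : ℚ)) *
        (eulerian m (n - k - ℓ - 1) : ℚ) := by
  have hn4 : 4 ≤ n := by omega
  have hd : (0 : ℚ) < (n : ℚ) - 1 := by
    have : (4 : ℚ) ≤ (n : ℚ) := by exact_mod_cast hn4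
    linarith
  have hstep : ∀ ℓ : ℕ, (n-1) * (WSet (n-1) (m+1) ℓ).ncard + (WSet (n-1) m ℓ).ncard ≤
      (WSet n (m+1) ℓ).ncard := by
    intro ℓ
    have := W_step (n-1) m ℓ
    rwa [show n - 1 + 1 = n by omega] at this
  have hcast : ((n : ℚ) - 1) = ((n - 1 : ℕ) : ℚ) := by
    have : ((n - 1 : ℕ) : ℚ) = (n : ℚ) - 1 := by
      push_cast [Nat.cast_sub (by omega : 1 ≤ n)]
      ring
    rw [this]
  apply Finset.sum_pos'
  · intro ℓ hℓ
    apply mul_nonneg _ (Nat.cast_nonneg _)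
    rw [sub_nonneg, le_div_iff₀ hd]
    have h1 : ((n-1 : ℕ) : ℚ) * ((WSet (n-1) (m+1) ℓ).ncard : ℚ) ≤
        ((WSet n (m+1) ℓ).ncard : ℚ) := by
      have := hstep ℓ
      have h2 : (n-1) * (WSet (n-1) (m+1) ℓ).ncard ≤ (WSet n (m+1) ℓ).ncard := by omega
      exact_mod_cast h2
    rw [weightedLah_eq, weightedLah_eq, mul_comm]
    rwa [hcast]
  · refine ⟨(n - k) - m, Finset.mem_range.2 (by omega), ?_⟩
    set ℓ0 := (n - k) - m with hℓ0
    apply mul_pos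
    · rw [sub_pos, weightedLah_eq, weightedLah_eq, lt_div_iff₀ hd]
      have hne : (WSet (n-1) m ℓ0).Nonempty := exists_partition (n-1) m ℓ0 hm (by omega)
      have hpos : 0 < (WSet (n-1) m ℓ0).ncard := (Set.ncard_pos (WSet_finite _ _ _)).2 hne
      have h2 : (n-1) * (WSet (n-1) (m+1) ℓ0).ncard < (WSet n (m+1) ℓ0).ncard := by
        have := hstep ℓ0
        omega
      have h3 : ((n-1 : ℕ) : ℚ) * ((WSet (n-1) (m+1) ℓ0).ncard : ℚ) <
          ((WSet n (m+1) ℓ0).ncard : ℚ) := by exact_mod_cast h2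
      rw [mul_comm]
      rwa [hcast]
    · have : 0 < eulerian m (n - k - ℓ0 - 1) := eulerian_pos m _ (by omega)
      exact_mod_cast this
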